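/- For every positive integer n, there exist a finite set T of tile types with |T| = 4n (tile types being functions t : Fin 4 → ℕ, with ℕ as the glue-label type), a strength function g : ℕ → ℕ, and a temperature τ ∈ ℕ with τ ≥ 1, such that for every strength function g' : ℕ → ℕ and every temperature τ' ∈ ℕ with τ' ≥ 1 satisfying D_{g',τ'}(t) = D_{g,τ}(t) for all t ∈ T, one has τ' ≥ 2^n. -/

import Mathlib

/-- for every positive `n` there is a tile set of `4n` tile types
with a strength function and temperature such that any locally equivalent
strength function and temperature has temperature at least `2^n`. -/
theorem exists_TAS_requiring_exponential_temperature
    (n : ℕ) (hn : 0 < n) :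
    ∃ (T : Finset (Fin 4 → ℕ)) (g : ℕ → ℕ) (τ : ℕ),
      T.card = 4 * n ∧ 1 ≤ τ ∧
      ∀ (g' : ℕ → ℕ) (τ' : ℕ), 1 ≤ τ' →
        (∀ t ∈ T, ∀ D : Finset (Fin 4),
          (τ' ≤ ∑ d ∈ D, g' (t d)) ↔ (τ ≤ ∑ d ∈ D, g (t d))) →
        2 ^ n ≤ τ' := by
  classical
  set g : ℕ → ℕ := fun m =>
    if m ≤ n then 2 ^ m - 1 else if m ≤ 2 * n then 2 ^ n - 2 ^ (m - n) + 1 else 0 with hg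
  set A : Finset (Fin 4 → ℕ) :=
    (Finset.range n).image (fun k => ![k, k, k + 1, n + 1 + k]) with hA
  set B : Finset (Fin 4 → ℕ) :=
    (Finset.range (3 * n)).image (fun j => (fun _ => 2 * n + 1 + j : Fin 4 → ℕ)) with hB
  refine ⟨A ∪ B, g, 2 ^ n, ?_, Nat.one_le_two_pow, ?_⟩
  · have hdisj : Disjoint A B := by
      rw [Finset.disjoint_left]
      rintro t ht ht'
      simp only [hA, hB, Finset.mem_image, Finset.mem_range] at ht ht'
      obtain ⟨k, hk, rfl⟩ := ht
      obtain ⟨j, hj, hEq⟩ := ht'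
      have := congrFun hEq 0
      simp at this
      omega
    rw [Finset.card_union_of_disjoint hdisj]
    have cA : A.card = n := by
      rw [hA, Finset.card_image_of_injective _ ?_, Finset.card_range]
      intro a b h
      have := congrFun h 0
      simpa using this
    have cB : B.card = 3 * n := by
      rw [hB, Finset.card_image_of_injective _ ?_, Finset.card_range]
      intro a b h
      have := congrFun h 0
      simpa using this
    omega
  · intro g' τ' hτ' H
    -- key facts about g on the tile labels, for k < n
    have hgk : ∀ k ≤ n, g k = 2 ^ k - 1 := by
      intro k hk; simp [hg, hk]
    have hgc : ∀ k < n, g (n + 1 + k) = 2 ^ n - 2 ^ (k + 1) + 1 := by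
      intro k hk
      have h1 : ¬ (n + 1 + k ≤ n) := by omega
      have h2 : n + 1 + k ≤ 2 * n := by omega
      have h3 : n + 1 + k - n = k + 1 := by omega
      simp [hg, h1, h2, h3]
    have hmem : ∀ k < n, (![k, k, k + 1, n + 1 + k] : Fin 4 → ℕ) ∈ A ∪ B := by
      intro k hk
      exact Finset.mem_union_left _ (Finset.mem_image.2 ⟨k, Finset.mem_range.2 hk, rfl⟩)
    have main : ∀ k ≤ n, 2 ^ k ≤ g' k + 1 := by
      intro k
      induction k with
      | zero => simp
      | succ k ih =>
        intro hk
        have hkn : k < n := by omega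
        have ihk := ih (by omega)
        have Ht := H _ (hmem k hkn)
        have h1 := Ht {0, 1, 3}
        have h2 := Ht {2, 3}
        have e1 : ∀ f : ℕ → ℕ, ∑ d ∈ ({0,1,3} : Finset (Fin 4)),
            f ((![k, k, k + 1, n + 1 + k] : Fin 4 → ℕ) d) = f k + f k + f (n + 1 + k) := by
          intro f; simp [Finset.sum_insert, Finset.mem_insert]; ring
        have e2 : ∀ f : ℕ → ℕ, ∑ d ∈ ({2,3} : Finset (Fin 4)),
            f ((![k, k, k + 1, n + 1 + k] : Fin 4 → ℕ) d) = f (k + 1) + f (n + 1 + k) := by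
          intro f; simp [Finset.sum_insert]
        rw [e1 g', e1 g] at h1
        rw [e2 g', e2 g] at h2
        rw [hgk k (by omega), hgc k hkn] at h1
        rw [hgk (k + 1) hk, hgc k hkn] at h2
        have hp1 : (1 : ℕ) ≤ 2 ^ k := Nat.one_le_two_pow
        have hp2 : 2 ^ (k + 1) ≤ 2 ^ n := Nat.pow_le_pow_right (by norm_num) hkn
        have hpow : 2 ^ (k + 1) = 2 * 2 ^ k := by ring
        -- under g: {0,1,3} sums to 2^n - 1 (no bind), {2,3} sums to 2^n (bind)
        have hnb : ¬ (τ' ≤ g' k + g' k + g' (n + 1 + k)) := by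
          rw [h1]; omega
        have hb : τ' ≤ g' (k + 1) + g' (n + 1 + k) := by
          rw [h2]; omega
        omega
    -- finally: glue n alone does not bind, so g' n < τ'
    have hfin : g' n < τ' := by
      have Ht := H _ (hmem (n - 1) (by omega)) {2}
      have e3 : ∀ f : ℕ → ℕ, ∑ d ∈ ({2} : Finset (Fin 4)),
          f ((![n - 1, n - 1, n - 1 + 1, n + 1 + (n - 1)] : Fin 4 → ℕ) d) = f (n - 1 + 1) := by
        intro f; simp
      rw [e3 g', e3 g] at Ht
      have hne : n - 1 + 1 = n := by omega
      rw [hne] at Ht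
      rw [hgk n le_rfl] at Ht
      have hp1 : (1 : ℕ) ≤ 2 ^ n := Nat.one_le_two_pow
      have := Ht
      omega
    have := main n le_rfl
    omega
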